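/- arXiv:1201.0872 — 3 statements merged into one kernel-verified Lean document; each statement's English description precedes it below -/
import Mathlib

section
/- Fix H ∈ (1/2,1) and s > 0, and let C_H = H(2H−1)(1−H)(3−2H). Then for all t, t' ≥ 0, 2 C_H ∫₀^∞ ∫_{−∞}^0 g_s(t,x,y) g_s(t',x,y) x^{2H−4} dx dy = ½( t^{2H} + t'^{2H} − |t − t'|^{2H} ); that is, the kernel √(2C_H) g_s(t,x,y) x^{H−2} reproduces the covariance of fractional Brownian motion with Hurst index H. -/
open MeasureTheory ProbabilityTheory Filter Topology

noncomputable section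

/-- The kernel `h(t,x,y) = ((t+y) ∧ 0 + x)₊ − (y ∧ 0 + x)₊`. -/
def hker (t x y : ℝ) : ℝ := max (min (t + y) 0 + x) 0 - max (min y 0 + x) 0

/-- The kernel `g_s(t,x,y) = h(t+s,x,y) − h(s,x,y)`. -/
def gker (s t x y : ℝ) : ℝ := hker (t + s) x y - hker s x y

/-- The constant `C_H = H(2H−1)(1−H)(3−2H)`. -/
def CH (H : ℝ) : ℝ := H * (2 * H - 1) * (1 - H) * (3 - 2 * H)

/-- A Poisson random measure with intensity `β` times Lebesgue measure on a region
`D ⊆ ℝ × ℝ`: for measurable `A ⊆ D` of finite Lebesgue measure, `M · A` is a Poisson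
random variable with mean `β · volume A`; counts over disjoint sets are independent;
and `M ω` is finitely additive on disjoint sets of finite measure. -/
structure IsPoissonRandomMeasure {Ω : Type*} [MeasureSpace Ω]
    (β : ℝ) (D : Set (ℝ × ℝ)) (M : Ω → Set (ℝ × ℝ) → ℕ) : Prop where
  measurable_eval : ∀ A : Set (ℝ × ℝ), MeasurableSet A → Measurable fun ω => M ω A
  law : ∀ A : Set (ℝ × ℝ), MeasurableSet A → A ⊆ D → volume A ≠ ⊤ →
    Measure.map (fun ω => M ω A) ℙ = poissonMeasure ((β * (volume A).toReal).toNNReal)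
  indep : ∀ {ι : Type} (A : ι → Set (ℝ × ℝ)), (∀ i, MeasurableSet (A i)) →
    (∀ i, A i ⊆ D) → (∀ i, volume (A i) ≠ ⊤) → Pairwise (Function.onFun Disjoint A) →
    iIndepFun (fun i ω => M ω (A i)) ℙ
  add : ∀ (ω : Ω) (A B : Set (ℝ × ℝ)), MeasurableSet A → MeasurableSet B →
    volume A ≠ ⊤ → volume B ≠ ⊤ → Disjoint A B → M ω (A ∪ B) = M ω A + M ω B

/-- A two-parameter Poisson process with intensity `β` on `ℝ₊ × ℝ₋`: a jointly
measurable `ℕ`-valued random field with `N ω x y = M ω ([0,x] × [y,0])` for a Poisson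
random measure `M` with intensity `β` times Lebesgue measure on `ℝ₊ × ℝ₋`. -/
def IsTwoParamPoisson {Ω : Type*} [MeasureSpace Ω] (β : ℝ)
    (N : Ω → ℝ → ℝ → ℕ) : Prop :=
  Measurable (fun p : Ω × ℝ × ℝ => N p.1 p.2.1 p.2.2) ∧
  ∃ M : Ω → Set (ℝ × ℝ) → ℕ,
    IsPoissonRandomMeasure β (Set.Ici 0 ×ˢ Set.Iic 0) M ∧
    ∀ ω x y, N ω x y = M ω (Set.Icc 0 x ×ˢ Set.Icc y 0)

/-- A two-parameter Poisson process with intensity `β` on `ℝ × ℝ`: a jointly measurable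
`ℕ`-valued random field with `N ω x y = M ω (R(x,y))` where `R(x,y)` is the closed
rectangle with opposite corners `(0,0)` and `(x,y)`, for a Poisson random measure `M`
with intensity `β` times Lebesgue measure. -/
def IsTwoParamPoissonPlane {Ω : Type*} [MeasureSpace Ω] (β : ℝ)
    (N : Ω → ℝ → ℝ → ℕ) : Prop :=
  Measurable (fun p : Ω × ℝ × ℝ => N p.1 p.2.1 p.2.2) ∧
  ∃ M : Ω → Set (ℝ × ℝ) → ℕ,
    IsPoissonRandomMeasure β Set.univ M ∧
    ∀ ω x y, N ω x y = M ω (Set.uIcc 0 x ×ˢ Set.uIcc 0 y)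

/-- `I₁(n,f)`, the integral over `Ω₁ = {0 < x₁ ≤ x₂, y₂ ≤ y₁ ≤ 0}`;
here `p.1 = (x₁, y₁)` and `p.2 = (x₂, y₂)`. -/
def I1 (n : ℝ) (f : ℝ → ℝ → ℝ) : ℝ :=
  n ^ 2 * ∫ p in {p : (ℝ × ℝ) × ℝ × ℝ |
      0 < p.1.1 ∧ p.1.1 ≤ p.2.1 ∧ p.2.2 ≤ p.1.2 ∧ p.1.2 ≤ 0},
    f p.1.1 p.1.2 * f p.2.1 p.2.2 * Real.sqrt (p.1.1 * |p.1.2|) *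
      Real.sqrt (p.2.1 * |p.2.2|) * Real.exp (-2 * n * (p.1.1 * p.1.2 - p.2.1 * p.2.2))

/-- `I₂(n,f)`, the integral over `Ω₂ = {0 < x₁ ≤ x₂, y₁ < y₂ ≤ 0}`;
here `p.1 = (x₁, y₁)` and `p.2 = (x₂, y₂)`. -/
def I2 (n : ℝ) (f : ℝ → ℝ → ℝ) : ℝ :=
  n ^ 2 * ∫ p in {p : (ℝ × ℝ) × ℝ × ℝ |
      0 < p.1.1 ∧ p.1.1 ≤ p.2.1 ∧ p.1.2 < p.2.2 ∧ p.2.2 ≤ 0},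
    f p.1.1 p.1.2 * f p.2.1 p.2.2 * Real.sqrt (p.1.1 * |p.1.2|) *
      Real.sqrt (p.2.1 * |p.2.2|) *
      Real.exp (-2 * n * (p.1.1 * (p.2.2 - p.1.2) - (p.2.1 - p.1.1) * p.2.2))

/-- `F_{n,f}(x,y) = √(x|y|) n² ∫_x^∞ ∫_y^0 f(x₂,y₂) √(x₂|y₂|)
e^{−2n[x(y₂−y)−(x₂−x)y₂]} dx₂ dy₂`. -/
def Fnf (n : ℝ) (f : ℝ → ℝ → ℝ) (x y : ℝ) : ℝ :=
  Real.sqrt (x * |y|) * n ^ 2 *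
    ∫ q in Set.Ioi x ×ˢ Set.Ioc y 0,
      f q.1 q.2 * Real.sqrt (q.1 * |q.2|) *
        Real.exp (-2 * n * (x * (q.2 - y) - (q.1 - x) * q.2))

end


set_option maxHeartbeats 1000000

noncomputable section AuxStmt15
open MeasureTheory Set

/-- length of `[u, u+t] ∩ [−x, 0]`. -/
def Fk (t x u : ℝ) : ℝ := max 0 (min t (min x (min (t + u + x) (-u))))

lemma Fk_eq_phi {t x : ℝ} (ht : 0 ≤ t) (hx : 0 ≤ x) (u : ℝ) :
    Fk t x u = max (min (t + u) 0 + x) 0 - max (min u 0 + x) 0 := by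
  simp only [Fk, min_def, max_def]
  split_ifs <;> linarith

lemma gker_eq {t x : ℝ} (ht : 0 ≤ t) (hx : 0 ≤ x) (s y : ℝ) :
    gker s t x y = Fk t x (y + s) := by
  have h : t + (y + s) = t + s + y := by ring
  have h2 : y + s = s + y := by ring
  rw [Fk_eq_phi ht hx, h, h2]
  simp only [gker, hker]
  ring

lemma Fk_eq_zero_of_nonneg {u : ℝ} (hu : 0 ≤ u) (t x : ℝ) : Fk t x u = 0 := by
  simp only [Fk]
  apply max_eq_left
  calc min t (min x (min (t + u + x) (-u))) ≤ -u := le_trans (min_le_right _ _)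
        (le_trans (min_le_right _ _) (min_le_right _ _))
  _ ≤ 0 := by linarith

lemma Fk_eq_zero_of_le {t x u : ℝ} (hu : u ≤ -t - x) : Fk t x u = 0 := by
  simp only [Fk]
  apply max_eq_left
  calc min t (min x (min (t + u + x) (-u))) ≤ t + u + x := le_trans (min_le_right _ _)
        (le_trans (min_le_right _ _) (min_le_left _ _))
  _ ≤ 0 := by linarith

lemma Fk_sub {t t' x : ℝ} (ht' : 0 ≤ t') (htt : t' ≤ t) (hx : 0 ≤ x) (u : ℝ) :
    Fk t x u - Fk t' x u = Fk (t - t') x (u + t') := by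
  rw [Fk_eq_phi (le_trans ht' htt) hx, Fk_eq_phi ht' hx, Fk_eq_phi (by linarith) hx]
  have h1 : t - t' + (u + t') = t + u := by ring
  rw [h1]
  have h2 : t' + u = u + t' := by ring
  rw [h2]
  ring

lemma Fk_continuous (t x : ℝ) : Continuous (Fk t x) := by
  unfold Fk; fun_prop

lemma Fk_eq_ramp {t x u : ℝ} (h1 : -t - x ≤ u) (h2 : u ≤ -max t x) : Fk t x u = t + u + x := by
  rcases le_total t x with h | h <;>
    simp only [Fk, max_def, min_def] at * <;> split_ifs at * <;> linarith

lemma Fk_eq_plateau {t x u : ℝ} (ht : 0 ≤ t) (hx : 0 ≤ x)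
    (h1 : -max t x ≤ u) (h2 : u ≤ -min t x) : Fk t x u = min t x := by
  rcases le_total t x with h | h <;>
    simp only [Fk, max_def, min_def] at * <;> split_ifs at * <;> linarith

lemma Fk_eq_neg {t x u : ℝ} (h1 : -min t x ≤ u) (h2 : u ≤ 0) : Fk t x u = -u := by
  rcases le_total t x with h | h <;>
    simp only [Fk, max_def, min_def] at * <;> split_ifs at * <;> linarith

lemma integrable_aux {f : ℝ → ℝ} (hf : Continuous f) (a b : ℝ)
    (h0 : ∀ u, u < a → f u = 0) (h1 : ∀ u, b < u → f u = 0) : Integrable f := by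
  apply hf.integrable_of_hasCompactSupport
  apply HasCompactSupport.intro (isCompact_Icc (a := a) (b := b))
  intro u hu
  simp only [mem_Icc, not_and_or, not_le] at hu
  rcases hu with h | h
  · exact h0 u h
  · exact h1 u h

/-- `∫ (Fk t x u)² du` in closed form. -/
def Qx (t x : ℝ) : ℝ := (min t x) ^ 2 * max t x - (min t x) ^ 3 / 3

lemma Q_eval {t x : ℝ} (ht : 0 ≤ t) (hx : 0 ≤ x) :
    ∫ u, Fk t x u ^ 2 = Qx t x := by
  set m := min t x with hm
  set M := max t x with hM
  have hm0 : 0 ≤ m := le_min ht hx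
  have hmM : m ≤ M := min_le_max
  have hsum : m + M = t + x := min_add_max t x
  have hcont : Continuous (fun u => Fk t x u ^ 2) := (Fk_continuous t x).pow 2
  have hzero : ∀ u ∉ Ioc (-t - x) 0, Fk t x u ^ 2 = 0 := by
    intro u hu
    simp only [mem_Ioc, not_and_or, not_le, not_lt] at hu
    rcases hu with h | h
    · rw [Fk_eq_zero_of_le (by linarith)]; ring
    · rw [Fk_eq_zero_of_nonneg h.le]; ring
  rw [← setIntegral_eq_integral_of_forall_compl_eq_zero hzero]
  rw [← intervalIntegral.integral_of_le (by linarith : -t - x ≤ 0)]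
  have hI : ∀ a b : ℝ, IntervalIntegrable (fun u => Fk t x u ^ 2) volume a b :=
    fun a b => hcont.intervalIntegrable a b
  rw [← intervalIntegral.integral_add_adjacent_intervals (b := -M) (hI _ _) (hI _ _),
      ← intervalIntegral.integral_add_adjacent_intervals (a := -M) (b := -m) (hI _ _) (hI _ _)]
  have P1 : ∫ u in (-t - x)..(-M), Fk t x u ^ 2 = m ^ 3 / 3 := by
    rw [intervalIntegral.integral_congr (g := fun u => (u + (t + x)) ^ 2) ?_]
    · rw [intervalIntegral.integral_comp_add_right (fun v => v ^ 2) (t + x)]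
      have e1 : -t - x + (t + x) = (0 : ℝ) := by ring
      have e2 : -M + (t + x) = m := by linarith
      rw [e1, e2, integral_pow]
      norm_num
    · intro u hu
      rw [uIcc_of_le (by linarith)] at hu
      show Fk t x u ^ 2 = (u + (t + x)) ^ 2
      rw [Fk_eq_ramp hu.1 hu.2]; ring
  have P2 : ∫ u in (-M)..(-m), Fk t x u ^ 2 = m ^ 2 * (M - m) := by
    rw [intervalIntegral.integral_congr (g := fun _ => m ^ 2) ?_]
    · rw [intervalIntegral.integral_const]
      simp only [smul_eq_mul]; ring
    · intro u hu
      rw [uIcc_of_le (by linarith)] at hu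
      show Fk t x u ^ 2 = m ^ 2
      rw [Fk_eq_plateau ht hx hu.1 hu.2]
  have P3 : ∫ u in (-m)..(0:ℝ), Fk t x u ^ 2 = m ^ 3 / 3 := by
    rw [intervalIntegral.integral_congr (g := fun u => u ^ 2) ?_]
    · rw [integral_pow]; ring
    · intro u hu
      rw [uIcc_of_le (by linarith)] at hu
      show Fk t x u ^ 2 = u ^ 2
      rw [Fk_eq_neg hu.1 hu.2]; ring
  rw [P1, P2, P3, Qx]
  ring

lemma integrable_mulFk (t t' x : ℝ) :
    Integrable (fun u => Fk t x u * Fk t' x u) := by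
  apply integrable_aux (((Fk_continuous t x).mul (Fk_continuous t' x))) (-t - x) 0
  · intro u hu; rw [Pi.mul_apply, Fk_eq_zero_of_le hu.le]; ring
  · intro u hu; rw [Pi.mul_apply, Fk_eq_zero_of_nonneg hu.le]; ring

lemma integrable_sqFk (t x : ℝ) : Integrable (fun u => Fk t x u ^ 2) := by
  have := integrable_mulFk t t x
  simpa [pow_two] using this

lemma integrable_sqFk_shift (t x c : ℝ) :
    Integrable (fun u => Fk t x (u + c) ^ 2) := by
  have hc : Continuous (fun u : ℝ => Fk t x (u + c) ^ 2) :=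
    ((Fk_continuous t x).comp (continuous_add_right c)).pow 2
  apply integrable_aux hc (-t - x - c) (-c)
  · intro u hu; rw [Fk_eq_zero_of_le (by linarith)]; ring
  · intro u hu; rw [Fk_eq_zero_of_nonneg (by linarith)]; ring

lemma inner_eval_le {t t' x : ℝ} (ht' : 0 ≤ t') (htt : t' ≤ t) (hx : 0 ≤ x) :
    ∫ u, Fk t x u * Fk t' x u = (Qx t x + Qx t' x - Qx |t - t'| x) / 2 := by
  have ht : 0 ≤ t := le_trans ht' htt
  have key : (fun u => Fk t x u * Fk t' x u) =
      fun u => (Fk t x u ^ 2 + Fk t' x u ^ 2 - Fk (t - t') x (u + t') ^ 2) / 2 := by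
    funext u
    rw [← Fk_sub ht' htt hx u]
    ring
  rw [key]
  rw [MeasureTheory.integral_div]
  have hfg : Integrable (fun u => Fk t x u ^ 2 + Fk t' x u ^ 2) :=
    (integrable_sqFk t x).add (integrable_sqFk t' x)
  rw [integral_sub hfg (integrable_sqFk_shift (t - t') x t'),
      integral_add (integrable_sqFk t x) (integrable_sqFk t' x)]
  rw [integral_add_right_eq_self (fun u => Fk (t - t') x u ^ 2) t']
  rw [Q_eval ht hx, Q_eval ht' hx, Q_eval (by linarith : (0:ℝ) ≤ t - t') hx,
      abs_of_nonneg (by linarith : (0:ℝ) ≤ t - t')]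

lemma inner_eval {t t' x : ℝ} (ht : 0 ≤ t) (ht' : 0 ≤ t') (hx : 0 ≤ x) :
    ∫ u, Fk t x u * Fk t' x u = (Qx t x + Qx t' x - Qx |t - t'| x) / 2 := by
  rcases le_total t' t with h | h
  · exact inner_eval_le ht' h hx
  · have := inner_eval_le ht h hx
    simp only [mul_comm] at this ⊢
    rw [this, abs_sub_comm]
    ring

/-- The combination of power integrals appearing in the outer integral. -/
def cHc (H : ℝ) : ℝ := 1/(2*H-1) - 1/(6*H) + 1/(2-2*H) - 1/(9-6*H)

lemma const_eval {H : ℝ} (hH : H ∈ Ioo (1/2 : ℝ) 1) : 2 * CH H * cHc H = 1 := by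
  obtain ⟨h1, h2⟩ := hH
  have n1 : 2*H - 1 ≠ 0 := by nlinarith
  have n2 : (6:ℝ)*H ≠ 0 := by nlinarith
  have n3 : 2 - 2*H ≠ 0 := by nlinarith
  have n4 : 9 - 6*H ≠ 0 := by nlinarith
  rw [CH, cHc]
  have n8 : 3 - 2*H ≠ 0 := by intro h; nlinarith
  have n9 : 1 - H ≠ 0 := by intro h; nlinarith
  have n10 : H - 1 ≠ 0 := by intro h; nlinarith
  have n11 : 9 - H*6 ≠ 0 := by intro h; nlinarith
  have n12 : (9:ℝ) - 6*H = 3*(3-2*H) := by ring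
  rw [n12]
  field_simp
  ring

lemma eqOn_left {H τ : ℝ} (hτ : 0 < τ) :
    EqOn (fun x => x ^ (2*H-4) * Qx τ x)
      (fun x => τ * x ^ (2*H-2) - x ^ (2*H-1) / 3) (Ioc 0 τ) := by
  intro x hx
  obtain ⟨hx0, hxτ⟩ := hx
  have e2 : x ^ (2*H-4) * x ^ (2:ℕ) = x ^ (2*H-2) := by
    rw [← Real.rpow_natCast x 2, ← Real.rpow_add hx0]
    congr 1; push_cast; ring
  have e3 : x ^ (2*H-4) * x ^ (3:ℕ) = x ^ (2*H-1) := by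
    rw [← Real.rpow_natCast x 3, ← Real.rpow_add hx0]
    congr 1; push_cast; ring
  simp only [Qx, min_eq_right hxτ, max_eq_left hxτ]
  linear_combination τ * e2 - e3 / 3

lemma eqOn_right {H τ : ℝ} (hτ : 0 < τ) :
    EqOn (fun x => x ^ (2*H-4) * Qx τ x)
      (fun x => τ^2 * x ^ (2*H-3) - τ^3/3 * x ^ (2*H-4)) (Ioi τ) := by
  intro x hx
  have hxτ : τ ≤ x := (mem_Ioi.mp hx).le
  have hx0 : (0:ℝ) < x := lt_of_lt_of_le hτ hxτ
  have e : x ^ (2*H-4) * x = x ^ (2*H-3) := by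
    rw [show (2*H-3) = (2*H-4) + 1 by ring, Real.rpow_add hx0, Real.rpow_one]
  simp only [Qx, min_eq_left hxτ, max_eq_right hxτ]
  linear_combination τ ^ 2 * e

lemma intOn_left {H τ : ℝ} (hH : H ∈ Ioo (1/2 : ℝ) 1) (hτ : 0 < τ) :
    IntegrableOn (fun x => τ * x ^ (2*H-2) - x ^ (2*H-1) / 3) (Ioc 0 τ) := by
  obtain ⟨h1, h2⟩ := hH
  have i1 : IntegrableOn (fun x : ℝ => x ^ (2*H-2)) (Ioc 0 τ) :=
    (intervalIntegrable_iff_integrableOn_Ioc_of_le hτ.le).mp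
      (intervalIntegral.intervalIntegrable_rpow' (by linarith))
  have i2 : IntegrableOn (fun x : ℝ => x ^ (2*H-1)) (Ioc 0 τ) :=
    (intervalIntegrable_iff_integrableOn_Ioc_of_le hτ.le).mp
      (intervalIntegral.intervalIntegrable_rpow' (by linarith))
  exact (i1.const_mul τ).sub (i2.div_const 3)

lemma intOn_right {H τ : ℝ} (hH : H ∈ Ioo (1/2 : ℝ) 1) (hτ : 0 < τ) :
    IntegrableOn (fun x => τ^2 * x ^ (2*H-3) - τ^3/3 * x ^ (2*H-4)) (Ioi τ) := by
  obtain ⟨h1, h2⟩ := hH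
  exact ((integrableOn_Ioi_rpow_of_lt (by linarith) hτ).const_mul _).sub
    ((integrableOn_Ioi_rpow_of_lt (by linarith) hτ).const_mul _)

lemma outer_integrable {H τ : ℝ} (hH : H ∈ Ioo (1/2 : ℝ) 1) (hτ : 0 ≤ τ) :
    IntegrableOn (fun x => x ^ (2*H-4) * Qx τ x) (Ioi 0) := by
  rcases eq_or_lt_of_le hτ with rfl | hτ
  · apply (integrableOn_congr_fun ?_ measurableSet_Ioi).mpr integrableOn_zero
    intro x hx
    simp [Qx, min_eq_left (mem_Ioi.mp hx).le, pow_succ]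
  · rw [← Ioc_union_Ioi_eq_Ioi hτ.le]
    apply IntegrableOn.union
    · exact (integrableOn_congr_fun (eqOn_left hτ) measurableSet_Ioc).mpr (intOn_left hH hτ)
    · exact (integrableOn_congr_fun (eqOn_right hτ) measurableSet_Ioi).mpr (intOn_right hH hτ)

lemma outer_eval {H τ : ℝ} (hH : H ∈ Ioo (1/2 : ℝ) 1) (hτ : 0 ≤ τ) :
    ∫ x in Ioi (0:ℝ), x ^ (2*H-4) * Qx τ x = cHc H * τ ^ (2*H) := by
  obtain ⟨h1, h2⟩ := hH
  rcases eq_or_lt_of_le hτ with rfl | hτ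
  · rw [setIntegral_congr_fun measurableSet_Ioi (g := fun _ => (0:ℝ)) ?_]
    · rw [integral_zero, Real.zero_rpow (by linarith), mul_zero]
    · intro x hx
      simp [Qx, min_eq_left (mem_Ioi.mp hx).le, pow_succ]
  · rw [← Ioc_union_Ioi_eq_Ioi hτ.le,
      setIntegral_union (Ioc_disjoint_Ioi le_rfl) measurableSet_Ioi
        ((integrableOn_congr_fun (eqOn_left (H := H) hτ) measurableSet_Ioc).mpr
          (intOn_left ⟨h1, h2⟩ hτ))
        ((integrableOn_congr_fun (eqOn_right (H := H) hτ) measurableSet_Ioi).mpr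
          (intOn_right ⟨h1, h2⟩ hτ))]
    have L : ∫ x in Ioc (0:ℝ) τ, x ^ (2*H-4) * Qx τ x
        = τ * (τ ^ (2*H-1) / (2*H-1)) - (τ ^ (2*H) / (2*H)) / 3 := by
      rw [setIntegral_congr_fun measurableSet_Ioc (eqOn_left hτ)]
      have i1 : IntegrableOn (fun x : ℝ => x ^ (2*H-2)) (Ioc 0 τ) :=
        (intervalIntegrable_iff_integrableOn_Ioc_of_le hτ.le).mp
          (intervalIntegral.intervalIntegrable_rpow' (by linarith))
      have i2 : IntegrableOn (fun x : ℝ => x ^ (2*H-1)) (Ioc 0 τ) :=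
        (intervalIntegrable_iff_integrableOn_Ioc_of_le hτ.le).mp
          (intervalIntegral.intervalIntegrable_rpow' (by linarith))
      rw [integral_sub (i1.const_mul τ) (i2.div_const 3), integral_const_mul,
        integral_div]
      rw [← intervalIntegral.integral_of_le hτ.le, ← intervalIntegral.integral_of_le hτ.le]
      rw [integral_rpow (Or.inl (by linarith)), integral_rpow (Or.inl (by linarith))]
      rw [Real.zero_rpow (by linarith : 2*H-2+1 ≠ 0), Real.zero_rpow (by linarith : 2*H-1+1 ≠ 0)]
      rw [show 2*H-2+1 = 2*H-1 by ring, show 2*H-1+1 = 2*H by ring]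
      ring
    have R : ∫ x in Ioi τ, x ^ (2*H-4) * Qx τ x
        = τ^2 * (-τ ^ (2*H-2) / (2*H-2)) - τ^3/3 * (-τ ^ (2*H-3) / (2*H-3)) := by
      rw [setIntegral_congr_fun measurableSet_Ioi (eqOn_right hτ)]
      rw [integral_sub ((integrableOn_Ioi_rpow_of_lt (by linarith) hτ).const_mul _)
        ((integrableOn_Ioi_rpow_of_lt (by linarith) hτ).const_mul _),
        integral_const_mul, integral_const_mul,
        integral_Ioi_rpow_of_lt (by linarith) hτ, integral_Ioi_rpow_of_lt (by linarith) hτ]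
      rw [show 2*H-3+1 = 2*H-2 by ring, show 2*H-4+1 = 2*H-3 by ring]
    rw [L, R]
    have eA : τ * τ ^ (2*H-1) = τ ^ (2*H) := by
      have h := Real.rpow_add hτ 1 (2*H-1)
      rw [Real.rpow_one] at h
      rw [← h]; congr 1; ring
    have eB : τ^(2:ℕ) * τ ^ (2*H-2) = τ ^ (2*H) := by
      have h := Real.rpow_add hτ ((2:ℕ):ℝ) (2*H-2)
      rw [Real.rpow_natCast] at h
      rw [← h]; congr 1; push_cast; ring
    have eC : τ^(3:ℕ) * τ ^ (2*H-3) = τ ^ (2*H) := by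
      have h := Real.rpow_add hτ ((3:ℕ):ℝ) (2*H-3)
      rw [Real.rpow_natCast] at h
      rw [← h]; congr 1; push_cast; ring
    have e1 : τ * (τ^(2*H-1)/(2*H-1)) = τ^(2*H)/(2*H-1) := by rw [← eA]; ring
    have e2 : τ^(2:ℕ) * (-τ^(2*H-2)/(2*H-2)) = -τ^(2*H)/(2*H-2) := by rw [← eB]; ring
    have e3 : τ^(3:ℕ)/3 * (-τ^(2*H-3)/(2*H-3)) = -(τ^(2*H))/3/(2*H-3) := by
      rw [← eC]; ring
    rw [e1, e2, e3, cHc]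
    have n1 : 2*H - 1 ≠ 0 := by intro h; nlinarith
    have n2 : (2:ℝ)*H ≠ 0 := by intro h; nlinarith
    have n3 : 2*H - 2 ≠ 0 := by intro h; nlinarith
    have n4 : 2*H - 3 ≠ 0 := by intro h; nlinarith
    have n5 : 2 - 2*H ≠ 0 := by intro h; nlinarith
    have n6 : 9 - 6*H ≠ 0 := by intro h; nlinarith
    have n7 : (6:ℝ)*H ≠ 0 := by intro h; nlinarith
    have n8 : 3 - 2*H ≠ 0 := by intro h; nlinarith
    have n9 : 1 - H ≠ 0 := by intro h; nlinarith
    have n10 : H - 1 ≠ 0 := by intro h; nlinarith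
    have n11 : 9 - H*6 ≠ 0 := by intro h; nlinarith
    have n12 : (9:ℝ) - 6*H = 3*(3-2*H) := by ring
    rw [n12]
    field_simp
    ring

end AuxStmt15

/-- For `H ∈ (1/2,1)`, `s > 0` and `C_H = H(2H−1)(1−H)(3−2H)`, for
all `t, t' ≥ 0`, `2C_H ∫₀^∞∫_{−∞}^0 g_s(t,x,y) g_s(t',x,y) x^{2H−4} dx dy
= (t^{2H} + t'^{2H} − |t−t'|^{2H})/2`: the kernel `√(2C_H) g_s(t,x,y) x^{H−2}`
reproduces the covariance of fractional Brownian motion with Hurst index `H`. -/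
theorem stmt15 {H s : ℝ} (hH : H ∈ Set.Ioo (1 / 2 : ℝ) 1) (hs : 0 < s)
    (t t' : ℝ) (ht : 0 ≤ t) (ht' : 0 ≤ t') :
    2 * CH H * ∫ x in Set.Ioi (0 : ℝ), ∫ y in Set.Iic (0 : ℝ),
        gker s t x y * gker s t' x y * x ^ (2 * H - 4)
      = (t ^ (2 * H) + t' ^ (2 * H) - |t - t'| ^ (2 * H)) / 2 := by
  classical
  have hd : (0:ℝ) ≤ |t - t'| := abs_nonneg _
  have key : Set.EqOn
      (fun x => ∫ y in Set.Iic (0:ℝ), gker s t x y * gker s t' x y * x ^ (2 * H - 4))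
      (fun x => (x ^ (2*H-4) * Qx t x + x ^ (2*H-4) * Qx t' x
        - x ^ (2*H-4) * Qx |t - t'| x) / 2) (Set.Ioi 0) := by
    intro x hx
    have hx0 : (0:ℝ) < x := hx
    show (∫ y in Set.Iic (0:ℝ), gker s t x y * gker s t' x y * x ^ (2 * H - 4))
      = (x ^ (2*H-4) * Qx t x + x ^ (2*H-4) * Qx t' x
        - x ^ (2*H-4) * Qx |t - t'| x) / 2
    have step1 : ∫ y in Set.Iic (0:ℝ), gker s t x y * gker s t' x y * x ^ (2 * H - 4)
        = ∫ y in Set.Iic (0:ℝ), Fk t x (y + s) * Fk t' x (y + s) * x ^ (2 * H - 4) := by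
      apply setIntegral_congr_fun measurableSet_Iic
      intro y _
      show gker s t x y * gker s t' x y * x ^ (2 * H - 4)
        = Fk t x (y + s) * Fk t' x (y + s) * x ^ (2 * H - 4)
      rw [gker_eq ht hx0.le, gker_eq ht' hx0.le]
    have step3 : ∫ y in Set.Iic (0:ℝ), Fk t x (y + s) * Fk t' x (y + s)
        = ∫ y, Fk t x (y + s) * Fk t' x (y + s) := by
      apply setIntegral_eq_integral_of_forall_compl_eq_zero
      intro y hy
      simp only [Set.mem_Iic, not_le] at hy
      rw [Fk_eq_zero_of_nonneg (by linarith : (0:ℝ) ≤ y + s)]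
      ring
    have step4 : ∫ y, Fk t x (y + s) * Fk t' x (y + s)
        = ∫ u, Fk t x u * Fk t' x u :=
      integral_add_right_eq_self (fun u => Fk t x u * Fk t' x u) s
    rw [step1, MeasureTheory.integral_mul_const, step3, step4,
      inner_eval ht ht' hx0.le]
    ring
  rw [setIntegral_congr_fun measurableSet_Ioi key]
  have iA := outer_integrable hH ht
  have iB := outer_integrable hH ht'
  have iC := outer_integrable hH hd
  have iAB : MeasureTheory.IntegrableOn
      (fun x => x ^ (2*H-4) * Qx t x + x ^ (2*H-4) * Qx t' x) (Set.Ioi 0) := iA.add iB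
  rw [MeasureTheory.integral_div, integral_sub iAB iC, integral_add iA iB,
    outer_eval hH ht, outer_eval hH ht', outer_eval hH hd]
  linear_combination ((t ^ (2*H) + t' ^ (2*H) - |t - t'| ^ (2*H)) / 2) * const_eval hH
end

section
/- Fix H ∈ (1/2,1) and s > 0. For 0 ≤ t ≤ 1 and a constant M < −t−s, let G(M) = {(x,y) : −t−s−y < x, M < y < −t−s} and φ̂_t(x,y) = φ_t(x,y)·1_{G(M)}(x,y), where φ_t(x,y) = g_s(t,x,y)/x^{2−H}. Then for every n > 0 and every (x₁,y₁) ∈ G(M), F_{n, φ̂_t}(x₁,y₁) ≤ √(|M|/s) · t / (4 x₁^{2−H}). -/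
open MeasureTheory ProbabilityTheory Filter Topology

lemma exp_shift_integrableOn {a b : ℝ} (hb : 0 < b) :
    MeasureTheory.IntegrableOn (fun x : ℝ => Real.exp (-b * (x - a))) (Set.Ioi a) := by
  have h := (exp_neg_integrableOn_Ioi a hb).const_mul (Real.exp (b * a))
  refine h.congr (Filter.Eventually.of_forall fun x => ?_)
  show Real.exp (b * a) * Real.exp (-b * x) = _
  rw [← Real.exp_add]; ring_nf

lemma exp_shift_integral {a b : ℝ} (hb : 0 < b) :
    ∫ x in Set.Ioi a, Real.exp (-b * (x - a)) = 1 / b := by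
  have hderiv : ∀ x ∈ Set.Ici a,
      HasDerivAt (fun x : ℝ => -Real.exp (-b * (x - a)) / b)
        (Real.exp (-b * (x - a))) x := by
    intro x _
    have h1 : HasDerivAt (fun x : ℝ => -b * (x - a)) (-b) x := by
      simpa using (((hasDerivAt_id x).sub_const a).const_mul (-b))
    have h2 := (h1.exp.neg).div_const b
    refine h2.congr_deriv ?_
    rw [div_eq_iff hb.ne']; ring
  have htend : Tendsto (fun x : ℝ => -Real.exp (-b * (x - a)) / b) atTop (𝓝 0) := by
    have h1 : Tendsto (fun x : ℝ => -b * (x - a)) atTop atBot := by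
      have : Tendsto (fun x : ℝ => x - a) atTop atTop :=
        tendsto_atTop_add_const_right _ (-a) tendsto_id
      exact Filter.Tendsto.const_mul_atTop_of_neg (by linarith) this
    have := (Real.tendsto_exp_atBot.comp h1).neg.div_const b
    simpa using this
  have := MeasureTheory.integral_Ioi_of_hasDerivAt_of_tendsto' hderiv
    (exp_shift_integrableOn hb) htend
  rw [this]
  simp [Real.exp_zero]
  field_simp

lemma gker_bound {s t x y : ℝ} (ht : 0 ≤ t) (h1 : -t - s - y < x) (h2 : y < -t - s) :
    0 ≤ gker s t x y ∧ gker s t x y ≤ t := by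
  unfold gker hker
  have e1 : min (t + s + y) 0 = t + s + y := min_eq_left (by linarith)
  have e2 : min (s + y) 0 = s + y := min_eq_left (by linarith)
  rw [e1, e2]
  have e3 : max (t + s + y + x) 0 = t + s + y + x := max_eq_left (by linarith)
  rw [e3]
  rcases max_cases (s + y + x) 0 with ⟨h, h'⟩ | ⟨h, h'⟩ <;> rw [h] <;>
    constructor <;> linarith

set_option maxHeartbeats 1000000 in
/-- For `H ∈ (1/2,1)`, `s > 0`, `t ∈ [0,1]`, `M < −t−s`,
`φ̂_t = φ_t · 1_{G(M)}` with `G(M) = {−t−s−y < x, M < y < −t−s}`, for every `n > 0`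
and every `(x₁,y₁) ∈ G(M)`, `F_{n,φ̂_t}(x₁,y₁) ≤ √(|M|/s) · t/(4 x₁^{2−H})`. -/
theorem stmt16 {H s : ℝ} (hH : H ∈ Set.Ioo (1 / 2 : ℝ) 1) (hs : 0 < s)
    (t M : ℝ) (ht : t ∈ Set.Icc (0 : ℝ) 1) (hM : M < -t - s)
    {n : ℝ} (hn : 0 < n) (x₁ y₁ : ℝ)
    (hmem : -t - s - y₁ < x₁ ∧ M < y₁ ∧ y₁ < -t - s) :
    Fnf n (fun x y =>
        if -t - s - y < x ∧ M < y ∧ y < -t - s then gker s t x y / x ^ (2 - H) else 0)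
      x₁ y₁
      ≤ Real.sqrt (|M| / s) * t / (4 * x₁ ^ (2 - H)) := by
  obtain ⟨hH1, hH2⟩ := hH
  obtain ⟨ht0, ht1⟩ := ht
  obtain ⟨hx1mem, hy1M, hy1ts⟩ := hmem
  have hx₁ : 0 < x₁ := by linarith
  have hy₁ : y₁ < 0 := by linarith
  have hM0 : M < 0 := by linarith
  set c : ℝ := t * x₁ ^ (H - 3 / 2 : ℝ) with hc
  have hc0 : 0 ≤ c := mul_nonneg ht0 (Real.rpow_nonneg hx₁.le _)
  set S : Set (ℝ × ℝ) := Set.Ioi x₁ ×ˢ Set.Ioc y₁ 0 with hS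
  have hSm : MeasurableSet S := measurableSet_Ioi.prod measurableSet_Ioc
  set B : ℝ × ℝ → ℝ := fun q => if q.2 ≤ -s then
      c * Real.exp (-(2 * n * x₁) * (q.2 - y₁)) *
        (Real.sqrt (-q.2) * Real.exp (-(2 * n * (-q.2)) * (q.1 - x₁))) else 0 with hB
  have hB_nonneg : ∀ q, 0 ≤ B q := by
    intro q
    rw [hB]; dsimp only
    split
    · have := Real.exp_pos (-(2 * n * x₁) * (q.2 - y₁))
      have := Real.exp_pos (-(2 * n * (-q.2)) * (q.1 - x₁))
      have := Real.sqrt_nonneg (-q.2)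
      positivity
    · exact le_rfl
  -- the integrand of Fnf
  set g : ℝ × ℝ → ℝ := fun q =>
      (if -t - s - q.2 < q.1 ∧ M < q.2 ∧ q.2 < -t - s then
        gker s t q.1 q.2 / q.1 ^ (2 - H) else 0) * Real.sqrt (q.1 * |q.2|) *
        Real.exp (-2 * n * (x₁ * (q.2 - y₁) - (q.1 - x₁) * q.2)) with hg
  -- pointwise comparison on S
  have hg_pt : ∀ q ∈ S, 0 ≤ g q ∧ g q ≤ B q := by
    rintro ⟨x₂, y₂⟩ hq
    obtain ⟨hqx, hqy⟩ := hq
    simp only [Set.mem_Ioi] at hqx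
    obtain ⟨hqy1, hqy2⟩ := hqy
    rw [hg, hB]; dsimp only
    by_cases hcond : -t - s - y₂ < x₂ ∧ M < y₂ ∧ y₂ < -t - s
    · rw [if_pos hcond]
      obtain ⟨hc1, hc2, hc3⟩ := hcond
      have hx2pos : 0 < x₂ := by linarith
      have hy2neg : y₂ < 0 := by linarith
      have habs : |y₂| = -y₂ := abs_of_neg hy2neg
      have hgk := gker_bound ht0 hc1 hc3
      have hrp : (0 : ℝ) < x₂ ^ (2 - H) := Real.rpow_pos_of_pos hx2pos _
      constructor
      · exact mul_nonneg (mul_nonneg (div_nonneg hgk.1 hrp.le) (Real.sqrt_nonneg _))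
          (Real.exp_pos _).le
      · have hBcond : y₂ ≤ -s := by linarith
        rw [if_pos hBcond]
        have hsqrt : Real.sqrt (x₂ * |y₂|) = Real.sqrt x₂ * Real.sqrt (-y₂) := by
          rw [habs, Real.sqrt_mul hx2pos.le]
        have hexp : Real.exp (-2 * n * (x₁ * (y₂ - y₁) - (x₂ - x₁) * y₂)) =
            Real.exp (-(2 * n * x₁) * (y₂ - y₁)) *
              Real.exp (-(2 * n * (-y₂)) * (x₂ - x₁)) := by
          rw [← Real.exp_add]; ring_nf
        rw [hsqrt, hexp]
        have hmain : gker s t x₂ y₂ / x₂ ^ (2 - H) * Real.sqrt x₂ ≤ c := by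
          have h1 : gker s t x₂ y₂ / x₂ ^ (2 - H) * Real.sqrt x₂ ≤
              t / x₂ ^ (2 - H) * Real.sqrt x₂ := by
            have := hgk.2
            gcongr
          have h2 : t / x₂ ^ (2 - H) * Real.sqrt x₂ = t * x₂ ^ (H - 3 / 2 : ℝ) := by
            rw [Real.sqrt_eq_rpow, div_mul_eq_mul_div, mul_div_assoc,
              ← Real.rpow_sub hx2pos]
            rw [show (1 / 2 - (2 - H) : ℝ) = H - 3 / 2 from by ring]
          have h3 : t * x₂ ^ (H - 3 / 2 : ℝ) ≤ c := by
            rw [hc]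
            exact mul_le_mul_of_nonneg_left
              (Real.rpow_le_rpow_of_nonpos hx₁ hqx.le (by linarith)) ht0
          linarith [h2 ▸ h1]
        calc gker s t x₂ y₂ / x₂ ^ (2 - H) * (Real.sqrt x₂ * Real.sqrt (-y₂)) *
              (Real.exp (-(2 * n * x₁) * (y₂ - y₁)) *
                Real.exp (-(2 * n * (-y₂)) * (x₂ - x₁)))
            = (gker s t x₂ y₂ / x₂ ^ (2 - H) * Real.sqrt x₂) *
              (Real.sqrt (-y₂) * (Real.exp (-(2 * n * x₁) * (y₂ - y₁)) *
                Real.exp (-(2 * n * (-y₂)) * (x₂ - x₁)))) := by ring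
          _ ≤ c * (Real.sqrt (-y₂) * (Real.exp (-(2 * n * x₁) * (y₂ - y₁)) *
                Real.exp (-(2 * n * (-y₂)) * (x₂ - x₁)))) := by
              apply mul_le_mul_of_nonneg_right hmain
              positivity
          _ = c * Real.exp (-(2 * n * x₁) * (y₂ - y₁)) *
              (Real.sqrt (-y₂) * Real.exp (-(2 * n * (-y₂)) * (x₂ - x₁))) := by ring
    · rw [if_neg hcond]
      constructor
      · simp
      · rw [zero_mul, zero_mul]
        split
        · have := Real.sqrt_nonneg (-y₂)
          have := Real.exp_pos (-(2 * n * x₁) * (y₂ - y₁))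
          have := Real.exp_pos (-(2 * n * (-y₂)) * (x₂ - x₁))
          positivity
        · exact le_rfl
  -- dominating product function
  set G : ℝ × ℝ → ℝ := fun q => (c * Real.sqrt (-M)) *
      (Real.exp (-(2 * n * s) * (q.1 - x₁)) * Real.exp (-(2 * n * x₁) * (q.2 - y₁)))
    with hG
  have hμeq : (volume.restrict (Set.Ioi x₁)).prod (volume.restrict (Set.Ioc y₁ 0)) =
      (volume : Measure (ℝ × ℝ)).restrict S := by
    rw [Measure.prod_restrict, ← Measure.volume_eq_prod]
  have hGint : IntegrableOn G S := by
    have h1 : IntegrableOn (fun x : ℝ => Real.exp (-(2 * n * s) * (x - x₁)))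
        (Set.Ioi x₁) := exp_shift_integrableOn (by positivity)
    have h2 : IntegrableOn (fun y : ℝ => Real.exp (-(2 * n * x₁) * (y - y₁)))
        (Set.Ioc y₁ 0) :=
      (exp_shift_integrableOn (a := y₁) (by positivity)).mono_set Set.Ioc_subset_Ioi_self
    have h3 := (h1.mul_prod h2).const_mul (c * Real.sqrt (-M))
    rw [hμeq] at h3
    exact h3
  have hBmeas : Measurable B := by
    rw [hB]
    refine Measurable.ite (measurableSet_le measurable_snd measurable_const) ?_ measurable_const
    fun_prop
  have hBle : ∀ q ∈ S, B q ≤ G q := by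
    rintro ⟨x₂, y₂⟩ hq
    obtain ⟨hqx, hqy⟩ := hq
    simp only [Set.mem_Ioi] at hqx
    obtain ⟨hqy1, hqy2⟩ := hqy
    rw [hB, hG]; dsimp only
    split
    · rename_i hys
      have h1 : Real.sqrt (-y₂) ≤ Real.sqrt (-M) := Real.sqrt_le_sqrt (by linarith)
      have h2 : Real.exp (-(2 * n * (-y₂)) * (x₂ - x₁)) ≤
          Real.exp (-(2 * n * s) * (x₂ - x₁)) := by
        apply Real.exp_le_exp.2
        nlinarith [mul_nonneg (mul_nonneg hn.le (sub_pos.2 hqx).le)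
          (by linarith : (0:ℝ) ≤ -y₂ - s)]
      calc c * Real.exp (-(2 * n * x₁) * (y₂ - y₁)) *
            (Real.sqrt (-y₂) * Real.exp (-(2 * n * (-y₂)) * (x₂ - x₁)))
          ≤ c * Real.exp (-(2 * n * x₁) * (y₂ - y₁)) *
            (Real.sqrt (-M) * Real.exp (-(2 * n * s) * (x₂ - x₁))) := by
            apply mul_le_mul_of_nonneg_left _ (by positivity)
            exact mul_le_mul h1 h2 (Real.exp_pos _).le (Real.sqrt_nonneg _)
        _ = c * Real.sqrt (-M) *
            (Real.exp (-(2 * n * s) * (x₂ - x₁)) *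
              Real.exp (-(2 * n * x₁) * (y₂ - y₁))) := by ring
    · positivity
  have hBint : IntegrableOn B S := by
    refine hGint.mono' hBmeas.aestronglyMeasurable ?_
    filter_upwards [ae_restrict_mem hSm] with q hq
    rw [Real.norm_eq_abs, abs_of_nonneg (hB_nonneg q)]
    exact hBle q hq
  -- comparison of integrals
  have hI1 : ∫ q in S, g q ≤ ∫ q in S, B q := by
    apply integral_mono_of_nonneg
    · filter_upwards [ae_restrict_mem hSm] with q hq using (hg_pt q hq).1
    · exact hBint
    · filter_upwards [ae_restrict_mem hSm] with q hq using (hg_pt q hq).2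
  -- Fubini for B
  have hBint' : Integrable B
      ((volume.restrict (Set.Ioi x₁)).prod (volume.restrict (Set.Ioc y₁ 0))) := by
    rw [hμeq]; exact hBint
  have hfub : ∫ q in S, B q = ∫ y in Set.Ioc y₁ 0, ∫ x in Set.Ioi x₁, B (x, y) := by
    rw [show (∫ q in S, B q) = ∫ q, B q
        ∂((volume.restrict (Set.Ioi x₁)).prod (volume.restrict (Set.Ioc y₁ 0))) by
      rw [hμeq]]
    exact integral_prod_symm B hBint'
  -- inner integral bound
  have hsqs : (0 : ℝ) < Real.sqrt s := Real.sqrt_pos.2 hs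
  have hinner : ∀ y ∈ Set.Ioc y₁ 0, (∫ x in Set.Ioi x₁, B (x, y)) ≤
      c / (2 * n * Real.sqrt s) * Real.exp (-(2 * n * x₁) * (y - y₁)) := by
    intro y hy
    by_cases hys : y ≤ -s
    · have hym : (0 : ℝ) < -y := by linarith
      have hb : (0 : ℝ) < 2 * n * (-y) := by positivity
      have hval : (∫ x in Set.Ioi x₁, B (x, y)) =
          (c * Real.exp (-(2 * n * x₁) * (y - y₁)) * Real.sqrt (-y)) *
            (1 / (2 * n * (-y))) := by
        have heq : ∀ x : ℝ, B (x, y) =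
            (c * Real.exp (-(2 * n * x₁) * (y - y₁)) * Real.sqrt (-y)) *
              Real.exp (-(2 * n * (-y)) * (x - x₁)) := by
          intro x
          rw [hB]; dsimp only
          rw [if_pos hys]; ring
        simp only [heq]
        rw [integral_const_mul, exp_shift_integral hb]
      rw [hval]
      have hsq : Real.sqrt s ≤ Real.sqrt (-y) := Real.sqrt_le_sqrt (by linarith)
      have hsqy : (0 : ℝ) < Real.sqrt (-y) := Real.sqrt_pos.2 hym
      have hid : Real.sqrt (-y) / (2 * n * (-y)) =
          1 / (2 * n * Real.sqrt (-y)) := by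
        have h2 : Real.sqrt (-y) * Real.sqrt (-y) = -y := Real.mul_self_sqrt hym.le
        rw [div_eq_div_iff (by positivity) (by positivity)]
        linear_combination 2 * n * h2
      calc c * Real.exp (-(2 * n * x₁) * (y - y₁)) * Real.sqrt (-y) *
            (1 / (2 * n * (-y)))
          = c * Real.exp (-(2 * n * x₁) * (y - y₁)) *
            (Real.sqrt (-y) / (2 * n * (-y))) := by ring
        _ = c * Real.exp (-(2 * n * x₁) * (y - y₁)) *
            (1 / (2 * n * Real.sqrt (-y))) := by rw [hid]
        _ ≤ c * Real.exp (-(2 * n * x₁) * (y - y₁)) *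
            (1 / (2 * n * Real.sqrt s)) := by
            apply mul_le_mul_of_nonneg_left _ (by positivity)
            apply one_div_le_one_div_of_le (by positivity)
            nlinarith
        _ = c / (2 * n * Real.sqrt s) * Real.exp (-(2 * n * x₁) * (y - y₁)) := by
            ring
    · have heq : ∀ x : ℝ, B (x, y) = 0 := by
        intro x; rw [hB]; exact if_neg hys
      simp only [heq, integral_zero]
      have := Real.exp_pos (-(2 * n * x₁) * (y - y₁))
      positivity
  -- outer integral bound
  have hout1 : ∫ y in Set.Ioc y₁ 0, (∫ x in Set.Ioi x₁, B (x, y)) ≤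
      ∫ y in Set.Ioc y₁ 0,
        c / (2 * n * Real.sqrt s) * Real.exp (-(2 * n * x₁) * (y - y₁)) := by
    apply integral_mono_of_nonneg
    · refine Filter.Eventually.of_forall fun y => ?_
      exact integral_nonneg fun x => hB_nonneg (x, y)
    · exact (((exp_shift_integrableOn (a := y₁) (b := 2 * n * x₁)
        (by positivity)).mono_set Set.Ioc_subset_Ioi_self).const_mul _)
    · filter_upwards [ae_restrict_mem measurableSet_Ioc] with y hy
        using hinner y hy
  have hout2 : ∫ y in Set.Ioc y₁ 0,
      c / (2 * n * Real.sqrt s) * Real.exp (-(2 * n * x₁) * (y - y₁)) ≤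
      c / (2 * n * Real.sqrt s) * (1 / (2 * n * x₁)) := by
    rw [integral_const_mul]
    apply mul_le_mul_of_nonneg_left _ (by positivity)
    have hmono : ∫ y in Set.Ioc y₁ 0, Real.exp (-(2 * n * x₁) * (y - y₁)) ≤
        ∫ y in Set.Ioi y₁, Real.exp (-(2 * n * x₁) * (y - y₁)) := by
      apply setIntegral_mono_set (exp_shift_integrableOn (by positivity))
      · exact Filter.Eventually.of_forall fun y => (Real.exp_pos _).le
      · exact (Set.Ioc_subset_Ioi_self).eventuallyLE
    calc ∫ y in Set.Ioc y₁ 0, Real.exp (-(2 * n * x₁) * (y - y₁))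
        ≤ ∫ y in Set.Ioi y₁, Real.exp (-(2 * n * x₁) * (y - y₁)) := hmono
      _ = 1 / (2 * n * x₁) := exp_shift_integral (by positivity)
  -- put it together
  have hItot : ∫ q in S, g q ≤ c / (2 * n * Real.sqrt s) * (1 / (2 * n * x₁)) := by
    calc ∫ q in S, g q ≤ ∫ q in S, B q := hI1
      _ = ∫ y in Set.Ioc y₁ 0, ∫ x in Set.Ioi x₁, B (x, y) := hfub
      _ ≤ c / (2 * n * Real.sqrt s) * (1 / (2 * n * x₁)) := hout1.trans hout2
  -- final computation
  have hFnf : Fnf n (fun x y =>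
      if -t - s - y < x ∧ M < y ∧ y < -t - s then gker s t x y / x ^ (2 - H) else 0)
      x₁ y₁ = Real.sqrt (x₁ * |y₁|) * n ^ 2 * ∫ q in S, g q := rfl
  rw [hFnf]
  have hsqle : Real.sqrt (x₁ * |y₁|) ≤ Real.sqrt x₁ * Real.sqrt (-M) := by
    rw [← Real.sqrt_mul hx₁.le]
    apply Real.sqrt_le_sqrt
    have : |y₁| = -y₁ := abs_of_neg hy₁
    nlinarith
  calc Real.sqrt (x₁ * |y₁|) * n ^ 2 * ∫ q in S, g q
      ≤ Real.sqrt (x₁ * |y₁|) * n ^ 2 *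
        (c / (2 * n * Real.sqrt s) * (1 / (2 * n * x₁))) := by
        apply mul_le_mul_of_nonneg_left hItot (by positivity)
    _ ≤ (Real.sqrt x₁ * Real.sqrt (-M)) * n ^ 2 *
        (c / (2 * n * Real.sqrt s) * (1 / (2 * n * x₁))) := by
        apply mul_le_mul_of_nonneg_right (mul_le_mul_of_nonneg_right hsqle (by positivity))
        positivity
    _ = Real.sqrt (|M| / s) * t / (4 * x₁ ^ (2 - H)) := by
        rw [abs_of_neg hM0, Real.sqrt_div (by linarith : (0:ℝ) ≤ -M)]
        have hkey : x₁ ^ (2 - H) * (Real.sqrt x₁ * x₁ ^ (H - 3 / 2 : ℝ)) = x₁ := by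
          rw [Real.sqrt_eq_rpow, ← Real.rpow_add hx₁, ← Real.rpow_add hx₁,
            show (2 - H + (1 / 2 + (H - 3 / 2)) : ℝ) = 1 from by ring, Real.rpow_one]
        have hxne : x₁ ^ (2 - H) ≠ 0 := (Real.rpow_pos_of_pos hx₁ _).ne'
        have hkey' : Real.sqrt x₁ * x₁ ^ (H - 3 / 2 : ℝ) = x₁ / x₁ ^ (2 - H) := by
          rw [eq_div_iff hxne]
          linear_combination hkey
        rw [hc]
        field_simp
        rw [show ((H * 2 - 3) / 2 : ℝ) = H - 3 / 2 from by ring]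
        linear_combination (4 * Real.sqrt (-M) * t) * hkey
end

section
/- Fix H ∈ (1/2,1) and s > 0. For 0 ≤ t ≤ 1 let φ_t(x,y) = g_s(t,x,y)/x^{2−H} for x > 0, y ≤ 0. Then ∫_{−∞}^{−t−s} ∫_{−t−s−y}^{∞} φ_t(x,y) · ( t / (2 x^{2−H}) ) dx dy = t^{2H} / ( 4(1−H)(3−2H)(2H−1) ). -/
open MeasureTheory ProbabilityTheory Filter Topology

section Stmt17Aux

open Set

private lemma rpow_diff_abs_le {p : ℝ} (hp : p < 1) {a t : ℝ} (ha : 0 < a) (ht : 0 ≤ t) :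
    |(a + t) ^ p - a ^ p| ≤ |p| * t * a ^ (p - 1) := by
  rcases eq_or_lt_of_le ht with h | h
  · simp [← h]
  · have hcont : ContinuousOn (fun x : ℝ => x ^ p) (Icc a (a + t)) := by
      intro x hx
      exact (Real.continuousAt_rpow_const x p (Or.inl (by linarith [hx.1]))).continuousWithinAt
    have hderiv : ∀ x ∈ Ioo a (a + t),
        HasDerivAt (fun x : ℝ => x ^ p) (p * x ^ (p - 1)) x := fun x hx =>
      Real.hasDerivAt_rpow_const (Or.inl (by linarith [hx.1] : x ≠ 0))
    obtain ⟨c, hc, hceq⟩ := exists_hasDerivAt_eq_slope (fun x : ℝ => x ^ p)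
      (fun x => p * x ^ (p - 1)) (by linarith) hcont hderiv
    have hc0 : 0 < c := lt_trans ha hc.1
    have hteq : a + t - a = t := by ring
    rw [hteq] at hceq
    have key : (a + t) ^ p - a ^ p = p * c ^ (p - 1) * t := by
      rw [hceq]; field_simp
    rw [key, abs_mul, abs_mul]
    have h1 : |c ^ (p - 1)| = c ^ (p - 1) := abs_of_nonneg (Real.rpow_nonneg hc0.le _)
    rw [h1]
    have h2 : c ^ (p - 1) ≤ a ^ (p - 1) :=
      Real.rpow_le_rpow_of_nonpos ha hc.1.le (by linarith)
    calc |p| * c ^ (p - 1) * |t| = |p| * t * c ^ (p - 1) := by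
            rw [abs_of_nonneg h.le]; ring
      _ ≤ |p| * t * a ^ (p - 1) := mul_le_mul_of_nonneg_left h2 (by positivity)

private lemma tendsto_rpow_diff {p : ℝ} (hp : p < 1) {t : ℝ} (ht : 0 ≤ t) :
    Tendsto (fun a : ℝ => (a + t) ^ p - a ^ p) atTop (𝓝 0) := by
  have h0 : Tendsto (fun a : ℝ => a ^ (p - 1)) atTop (𝓝 0) := by
    simpa using tendsto_rpow_neg_atTop (by linarith : (0:ℝ) < -(p - 1))
  have hg : Tendsto (fun a : ℝ => |p| * t * a ^ (p - 1)) atTop (𝓝 0) := by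
    simpa using h0.const_mul (|p| * t)
  refine squeeze_zero_norm' ?_ hg
  filter_upwards [eventually_gt_atTop (0:ℝ)] with a ha
  exact rpow_diff_abs_le hp ha ht
private lemma inner_eval_s17 {H : ℝ} (h1 : 1/2 < H) (h2 : H < 1) {t a : ℝ} (ht : 0 < t) (ha : 0 < a) :
    ∫ x in Set.Ioi a, min (x - a) t * x ^ (2*H - 4)
      = (a ^ (2*H-2) - (a+t) ^ (2*H-2)) / ((2*H-2)*(2*H-3)) := by
  have hat : 0 < a + t := by linarith
  have hle : a ≤ a + t := by linarith
  have h22 : 2*H - 2 ≠ 0 := by intro h; nlinarith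
  have h23 : 2*H - 3 ≠ 0 := by intro h; nlinarith
  have h4lt : 2*H - 4 < -1 := by linarith
  -- integrand continuous on [a, a+t]
  have hcontOn : ContinuousOn (fun x : ℝ => min (x - a) t * x ^ (2*H - 4)) (Icc a (a+t)) := by
    apply ContinuousOn.mul
    · exact ((continuous_id.sub continuous_const).min continuous_const).continuousOn
    · intro x hx
      exact (Real.continuousAt_rpow_const x _ (Or.inl (by linarith [hx.1]))).continuousWithinAt
  have hint1 : IntegrableOn (fun x : ℝ => min (x - a) t * x ^ (2*H - 4)) (Ioc a (a+t)) :=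
    (hcontOn.integrableOn_Icc).mono_set Ioc_subset_Icc_self
  have hbase : IntegrableOn (fun x : ℝ => t * x ^ (2*H - 4)) (Ioi (a+t)) :=
    (integrableOn_Ioi_rpow_of_lt h4lt hat).const_mul t
  have hint2 : IntegrableOn (fun x : ℝ => min (x - a) t * x ^ (2*H - 4)) (Ioi (a+t)) := by
    refine hbase.congr_fun (fun x hx => ?_) measurableSet_Ioi
    have : min (x - a) t = t := min_eq_right (by simp only [mem_Ioi] at hx; linarith)
    simp only [this]
  have hsplit : Ioc a (a+t) ∪ Ioi (a+t) = Ioi a := Ioc_union_Ioi_eq_Ioi hle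
  rw [← hsplit, setIntegral_union (Ioc_disjoint_Ioi le_rfl) measurableSet_Ioi hint1 hint2]
  -- first piece
  have hIoc : ∫ x in Ioc a (a+t), min (x - a) t * x ^ (2*H - 4)
      = ((a+t) ^ (2*H-2)/(2*H-2) - a * ((a+t) ^ (2*H-3)/(2*H-3)))
        - (a ^ (2*H-2)/(2*H-2) - a * (a ^ (2*H-3)/(2*H-3))) := by
    rw [← intervalIntegral.integral_of_le hle]
    have hcong : ∫ x in a..(a+t), min (x - a) t * x ^ (2*H - 4)
        = ∫ x in a..(a+t), (x - a) * x ^ (2*H - 4) := by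
      apply intervalIntegral.integral_congr
      intro x hx
      rw [uIcc_of_le hle] at hx
      have : min (x - a) t = x - a := min_eq_left (by linarith [hx.2])
      simp only [this]
    rw [hcong]
    apply intervalIntegral.integral_eq_sub_of_hasDerivAt
      (f := fun x : ℝ => x ^ (2*H-2)/(2*H-2) - a * (x ^ (2*H-3)/(2*H-3)))
    · intro x hx
      rw [uIcc_of_le hle] at hx
      have hx0 : (0:ℝ) < x := lt_of_lt_of_le ha hx.1
      have d1 : HasDerivAt (fun y : ℝ => y ^ (2*H-2)) ((2*H-2) * x ^ (2*H-2-1)) x :=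
        Real.hasDerivAt_rpow_const (Or.inl hx0.ne')
      have d2 : HasDerivAt (fun y : ℝ => y ^ (2*H-3)) ((2*H-3) * x ^ (2*H-3-1)) x :=
        Real.hasDerivAt_rpow_const (Or.inl hx0.ne')
      have := (d1.div_const (2*H-2)).sub ((d2.div_const (2*H-3)).const_mul a)
      convert this using 1
      · rfl
      have e1 : 2*H-2-1 = 2*H-3 := by ring
      have e2 : 2*H-3-1 = 2*H-4 := by ring
      rw [e1, e2]
      have hx3 : x ^ (2*H-3) = x ^ (2*H-4) * x := by
        rw [show (2*H-3) = (2*H-4)+1 by ring, Real.rpow_add_one hx0.ne']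
      rw [hx3]
      have hHm1 : H - 1 ≠ 0 := by intro hc; linarith
      field_simp
    · apply ContinuousOn.intervalIntegrable
      rw [uIcc_of_le hle]
      apply ContinuousOn.mul
      · exact continuousOn_id.sub continuousOn_const
      · intro x hx
        exact (Real.continuousAt_rpow_const x _ (Or.inl (by linarith [hx.1]))).continuousWithinAt
  -- second piece
  have hIoi : ∫ x in Ioi (a+t), min (x - a) t * x ^ (2*H - 4)
      = t * (-(a+t) ^ (2*H-3)/(2*H-3)) := by
    rw [setIntegral_congr_fun measurableSet_Ioi
      (g := fun x : ℝ => t * x ^ (2*H-4)) (fun x hx => by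
        have : min (x - a) t = t := min_eq_right (by simp only [mem_Ioi] at hx; linarith)
        simp [this])]
    rw [integral_const_mul, integral_Ioi_rpow_of_lt h4lt hat,
      show (2*H-4+1) = 2*H-3 by ring]
  rw [hIoc, hIoi]
  have e1 : (a+t) ^ (2*H-2) = (a+t) ^ (2*H-3) * (a+t) := by
    rw [show (2*H-2) = (2*H-3)+1 by ring, Real.rpow_add_one hat.ne']
  have e2 : a ^ (2*H-2) = a ^ (2*H-3) * a := by
    rw [show (2*H-2) = (2*H-3)+1 by ring, Real.rpow_add_one ha.ne']
  rw [e1, e2]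
  have hHm1 : H - 1 ≠ 0 := by intro hc; linarith
  field_simp
  ring
private lemma outer_integrable_s17 {H s t : ℝ} (h1 : 1/2 < H) (h2 : H < 1) (hs : 0 < s) (ht : 0 < t) :
    IntegrableOn (fun u : ℝ => (u - (t+s)) ^ (2*H-2) - (u - (t+s) + t) ^ (2*H-2))
      (Set.Ioi (t+s)) := by
  have hb0 : (0:ℝ) < t + s := by linarith
  have hq1 : (-1:ℝ) < 2*H-2 := by linarith
  have hsplit : Ioc (t+s) (t+s+1) ∪ Ioi (t+s+1) = Ioi (t+s) :=
    Ioc_union_Ioi_eq_Ioi (by linarith)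
  rw [← hsplit]
  apply IntegrableOn.union
  · apply Integrable.sub
    · have h0 : IntervalIntegrable (fun x : ℝ => x ^ (2*H-2)) volume 0 1 :=
        intervalIntegral.intervalIntegrable_rpow' hq1
      have h1' := h0.comp_sub_right (t+s)
      rw [zero_add, add_comm 1 (t+s)] at h1'
      rwa [intervalIntegrable_iff_integrableOn_Ioc_of_le (by linarith)] at h1'
    · have hc : ContinuousOn (fun u : ℝ => (u - (t+s) + t) ^ (2*H-2)) (Icc (t+s) (t+s+1)) := by
        intro u hu
        have : u - (t+s) + t ≠ 0 := by have := hu.1; simp only [mem_Icc] at hu; nlinarith [hu.1]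
        exact (ContinuousAt.continuousWithinAt
          (((continuous_id.sub continuous_const).add continuous_const).continuousAt.rpow_const
            (Or.inl this)))
      exact hc.integrableOn_Icc.mono_set Ioc_subset_Icc_self
  · have hgint : IntegrableOn
        (fun u : ℝ => |2*H-2| * t * ((t+s+1) ^ (3-2*H) * u ^ (2*H-3))) (Ioi (t+s+1)) := by
      have h5 : IntegrableOn
          (fun u : ℝ => |2*H-2| * t * (t+s+1) ^ (3-2*H) * u ^ (2*H-3)) (Ioi (t+s+1)) :=
        (integrableOn_Ioi_rpow_of_lt (by linarith : 2*H-3 < -1)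
          (by linarith : (0:ℝ) < t+s+1)).const_mul (|2*H-2| * t * (t+s+1) ^ (3-2*H))
      refine h5.congr_fun (fun u hu => by ring) measurableSet_Ioi
    refine Integrable.mono' hgint ?_ ?_
    · apply AEStronglyMeasurable.sub <;>
      · apply Measurable.aestronglyMeasurable
        fun_prop
    · filter_upwards [ae_restrict_mem measurableSet_Ioi] with u hu
      simp only [mem_Ioi] at hu
      have hu0 : (0:ℝ) < u := by linarith
      have ha : (0:ℝ) < u - (t+s) := by linarith
      have step1 : ‖(u - (t+s)) ^ (2*H-2) - (u - (t+s) + t) ^ (2*H-2)‖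
          ≤ |2*H-2| * t * (u - (t+s)) ^ (2*H-3) := by
        rw [Real.norm_eq_abs, abs_sub_comm]
        have := rpow_diff_abs_le (p := 2*H-2) (by linarith) ha ht.le
        rw [show (2*H-2-1) = 2*H-3 by ring] at this
        exact this
      have step2 : (u - (t+s)) ^ (2*H-3) ≤ (t+s+1) ^ (3-2*H) * u ^ (2*H-3) := by
        have hub : u / (t+s+1) ≤ u - (t+s) := by
          rw [div_le_iff₀ (by linarith)]
          nlinarith
        have hd0 : (0:ℝ) < u / (t+s+1) := by positivity
        have h3 : (u - (t+s)) ^ (2*H-3) ≤ (u / (t+s+1)) ^ (2*H-3) :=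
          Real.rpow_le_rpow_of_nonpos hd0 hub (by linarith)
        have h4 : (u / (t+s+1)) ^ (2*H-3) = (t+s+1) ^ (3-2*H) * u ^ (2*H-3) := by
          rw [Real.div_rpow hu0.le (by linarith : (0:ℝ) ≤ t+s+1), div_eq_mul_inv,
            ← Real.rpow_neg (by linarith : (0:ℝ) ≤ t+s+1), show -(2*H-3) = 3-2*H by ring]
          ring
        linarith [h3, h4.le]
      calc ‖(u - (t+s)) ^ (2*H-2) - (u - (t+s) + t) ^ (2*H-2)‖
          ≤ |2*H-2| * t * (u - (t+s)) ^ (2*H-3) := step1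
        _ ≤ |2*H-2| * t * ((t+s+1) ^ (3-2*H) * u ^ (2*H-3)) :=
            mul_le_mul_of_nonneg_left step2 (by positivity)

end Stmt17Aux

/-- For `H ∈ (1/2,1)`, `s > 0`, `t ∈ [0,1]` and
`φ_t(x,y) = g_s(t,x,y)/x^{2−H}`,
`∫_{−∞}^{−t−s}∫_{−t−s−y}^∞ φ_t(x,y) · (t/(2x^{2−H})) dx dy
= t^{2H}/(4(1−H)(3−2H)(2H−1))`. -/
theorem stmt17 {H s : ℝ} (hH : H ∈ Set.Ioo (1 / 2 : ℝ) 1) (hs : 0 < s)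
    (t : ℝ) (ht : t ∈ Set.Icc (0 : ℝ) 1) :
    (∫ y in Set.Iio (-t - s), ∫ x in Set.Ioi (-t - s - y),
        (gker s t x y / x ^ (2 - H)) * (t / (2 * x ^ (2 - H))))
      = t ^ (2 * H) / (4 * (1 - H) * (3 - 2 * H) * (2 * H - 1)) := by
  obtain ⟨hH1, hH2⟩ := hH
  obtain ⟨ht0, ht1⟩ := ht
  rcases eq_or_lt_of_le ht0 with h | htpos
  · -- t = 0
    rw [← h]
    have h2H : (2:ℝ) * H ≠ 0 := by positivity
    simp [Real.zero_rpow h2H]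
  -- t > 0
  have h22 : 2*H - 2 ≠ 0 := by intro hc; nlinarith
  have h23 : 2*H - 3 ≠ 0 := by intro hc; nlinarith
  have h21 : 2*H - 1 ≠ 0 := by intro hc; nlinarith
  have hr0 : (0:ℝ) ≤ 2*H - 1 := by linarith
  -- Step A: evaluate the inner integral
  have stepA : Set.EqOn
      (fun y => ∫ x in Set.Ioi (-t - s - y),
        (gker s t x y / x ^ (2 - H)) * (t / (2 * x ^ (2 - H))))
      (fun y => t/2 * (((-t - s - y) ^ (2*H-2) - (-t - s - y + t) ^ (2*H-2))
          / ((2*H-2)*(2*H-3))))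
      (Set.Iio (-t - s)) := by
    intro y hy
    simp only [Set.mem_Iio] at hy
    have ha : 0 < -t - s - y := by linarith
    have hEq : Set.EqOn
        (fun x => (gker s t x y / x ^ (2 - H)) * (t / (2 * x ^ (2 - H))))
        (fun x => t/2 * (min (x - (-t - s - y)) t * x ^ (2*H - 4)))
        (Set.Ioi (-t - s - y)) := by
      intro x hx
      simp only [Set.mem_Ioi] at hx
      have hx0 : 0 < x := lt_trans ha hx
      have hg : gker s t x y = min (x - (-t - s - y)) t := by
        simp only [gker, hker]
        rw [min_eq_left (by linarith : t + s + y ≤ 0),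
          min_eq_left (by linarith : s + y ≤ 0),
          min_eq_left (by linarith : y ≤ 0),
          max_eq_left (by linarith : (0:ℝ) ≤ t + s + y + x)]
        rcases le_total (s + y + x) 0 with hc | hc
        · rw [max_eq_right hc, min_eq_left (by linarith)]; ring
        · rw [max_eq_left hc, min_eq_right (by linarith)]; ring
      have key : x ^ (2*H - 4) = (x ^ ((2:ℝ) - H) * x ^ ((2:ℝ) - H))⁻¹ := by
        rw [← Real.rpow_add hx0, ← Real.rpow_neg hx0.le,
          show -((2 - H) + (2 - H)) = 2*H - 4 by ring]
      have hxp : x ^ ((2:ℝ) - H) ≠ 0 := (Real.rpow_pos_of_pos hx0 _).ne'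
      simp only [hg, key]
      field_simp
    dsimp only
    rw [setIntegral_congr_fun measurableSet_Ioi hEq, integral_const_mul,
      inner_eval_s17 hH1 hH2 htpos ha]
  rw [setIntegral_congr_fun measurableSet_Iio stepA]
  -- Step B: substitute u = -y
  rw [← integral_Iic_eq_integral_Iio]
  have hneg := integral_comp_neg_Iic (-t - s)
    (fun u => t/2 * (((u - (t+s)) ^ (2*H-2) - (u - (t+s) + t) ^ (2*H-2))
      / ((2*H-2)*(2*H-3))))
  simp only [show -(-t - s) = t + s by ring] at hneg
  have hcong : ∫ y in Set.Iic (-t - s),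
      t/2 * (((-t - s - y) ^ (2*H-2) - (-t - s - y + t) ^ (2*H-2)) / ((2*H-2)*(2*H-3)))
      = ∫ y in Set.Iic (-t - s),
      t/2 * (((-y - (t+s)) ^ (2*H-2) - (-y - (t+s) + t) ^ (2*H-2)) / ((2*H-2)*(2*H-3))) := by
    refine setIntegral_congr_fun measurableSet_Iic (fun y _ => ?_)
    rw [show -t - s - y = -y - (t+s) by ring]
  rw [hcong, hneg]
  -- Step C: FTC on (t+s, ∞)
  set Φ : ℝ → ℝ := fun u => t/2 * (((u - (t+s)) ^ (2*H-1) - (u - (t+s) + t) ^ (2*H-1))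
      / ((2*H-2)*(2*H-3)*(2*H-1))) with hΦ
  have hcont : ContinuousWithinAt Φ (Set.Ici (t+s)) (t+s) := by
    apply ContinuousAt.continuousWithinAt
    have c1 : ContinuousAt (fun u : ℝ => (u - (t+s)) ^ (2*H-1)) (t+s) :=
      ((continuous_id.sub continuous_const).continuousAt).rpow_const (Or.inr hr0)
    have c2 : ContinuousAt (fun u : ℝ => (u - (t+s) + t) ^ (2*H-1)) (t+s) :=
      (((continuous_id.sub continuous_const).add continuous_const).continuousAt).rpow_const
        (Or.inr hr0)
    exact ((c1.sub c2).div_const _).const_mul _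
  have hderiv : ∀ u ∈ Set.Ioi (t+s), HasDerivAt Φ
      (t/2 * (((u - (t+s)) ^ (2*H-2) - (u - (t+s) + t) ^ (2*H-2)) / ((2*H-2)*(2*H-3)))) u := by
    intro u hu
    simp only [Set.mem_Ioi] at hu
    have hu1 : (0:ℝ) < u - (t+s) := by linarith
    have hu2 : (0:ℝ) < u - (t+s) + t := by linarith
    have d1 : HasDerivAt (fun z : ℝ => z - (t+s)) 1 u := (hasDerivAt_id u).sub_const _
    have d2 : HasDerivAt (fun z : ℝ => z - (t+s) + t) 1 u := d1.add_const _
    have D1 := d1.rpow_const (p := 2*H-1) (Or.inl hu1.ne')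
    have D2 := d2.rpow_const (p := 2*H-1) (Or.inl hu2.ne')
    have := ((D1.sub D2).div_const ((2*H-2)*(2*H-3)*(2*H-1))).const_mul (t/2)
    convert this using 1
    · rfl
    · rfl
    · rfl
    rw [show (2*H-1-1) = 2*H-2 by ring]
    field_simp
  have hint : IntegrableOn
      (fun u : ℝ => t/2 * (((u - (t+s)) ^ (2*H-2) - (u - (t+s) + t) ^ (2*H-2))
        / ((2*H-2)*(2*H-3)))) (Set.Ioi (t+s)) := by
    have hbase : IntegrableOn
        (fun u : ℝ => (t/2 * (1/((2*H-2)*(2*H-3)))) *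
          ((u - (t+s)) ^ (2*H-2) - (u - (t+s) + t) ^ (2*H-2))) (Set.Ioi (t+s)) :=
      (outer_integrable_s17 hH1 hH2 hs htpos).const_mul _
    exact hbase.congr_fun (fun u _ => by ring) measurableSet_Ioi
  have htend : Tendsto Φ atTop (𝓝 0) := by
    have h0 : Tendsto (fun a : ℝ => (a + t) ^ (2*H-1) - a ^ (2*H-1)) atTop (𝓝 0) :=
      tendsto_rpow_diff (by linarith) htpos.le
    have h1 : Tendsto (fun u : ℝ => u - (t+s)) atTop atTop := by
      simpa [sub_eq_add_neg] using
        tendsto_atTop_add_const_right atTop (-(t+s)) (tendsto_id (α := ℝ))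
    have h2 : Tendsto (fun u : ℝ => (u - (t+s) + t) ^ (2*H-1) - (u - (t+s)) ^ (2*H-1))
        atTop (𝓝 0) := by
      have := h0.comp h1
      exact this
    have h3 := ((h2.neg).div_const ((2*H-2)*(2*H-3)*(2*H-1))).const_mul (t/2)
    simp only [neg_zero, zero_div, mul_zero] at h3
    refine h3.congr (fun u => ?_)
    simp only [hΦ]
    ring
  rw [integral_Ioi_of_hasDerivAt_of_tendsto hcont hderiv hint htend]
  -- evaluate
  simp only [hΦ]
  rw [show t + s - (t+s) = 0 by ring, zero_add, Real.zero_rpow h21,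
    show (2:ℝ)*H = (2*H-1)+1 by ring, Real.rpow_add_one htpos.ne']
  have hH1' : (1:ℝ) - H ≠ 0 := by intro hc; nlinarith
  have h32 : (3:ℝ) - 2*H ≠ 0 := by intro hc; nlinarith
  have hHm1 : H - 1 ≠ 0 := by intro hc; linarith
  rw [show (2*H-1+1-2) = 2*H-2 by ring, show (2*H-1+1-3) = 2*H-3 by ring,
    show (2*H-1+1-1) = 2*H-1 by ring, show (3 - (2*H-1+1)) = 3-2*H by ring,
    show (2*H-2)*(2*H-3)*(2*H-1) = (4*(1-H)*(3-2*H)*(2*H-1))/2 by ring]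
  have hD : 4*(1-H)*(3-2*H)*(2*H-1) ≠ 0 :=
    mul_ne_zero (mul_ne_zero (mul_ne_zero (by norm_num) hH1') h32) h21
  generalize 4*(1-H)*(3-2*H)*(2*H-1) = D at hD ⊢
  field_simp
  ring
end
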